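/- arXiv:1001.1534 — 7 statements merged into one kernel-verified Lean document; each statement's English description precedes it below -/
import Mathlib

section
/- Let f, g : ℕ → ℝ be functions with f(k) > 0 and g(k) > 0 for all k. If f is of uniform polynomial growth with exponent n_f and g is of uniform polynomial growth with exponent n_g, then the function f + g is of uniform polynomial growth with exponent max(n_f, n_g). -/
open Filter Real

lemma upg_decay (r : ℕ → ℝ) (hr : ∀ k, 0 < r k) (n : ℝ) (hn : n < 0)
    (h : Tendsto (fun k : ℕ => (k : ℝ) * (r (k + 1) - r k) / r k) atTop (nhds n)) :
    Tendsto r atTop (nhds 0) := by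
  set c : ℝ := -n / 2 with hc
  have hcpos : 0 < c := by simp [hc]; linarith
  -- eventually expr < -c
  have hev : ∀ᶠ k : ℕ in atTop, (k : ℝ) * (r (k + 1) - r k) / r k < -c := by
    have := (tendsto_order.mp h).2 (-c) (by linarith [hcpos])
    exact this
  obtain ⟨K0, hK0⟩ := hev.exists_forall_of_atTop
  obtain ⟨K1, hK1⟩ : ∃ K1 : ℕ, c < K1 := exists_nat_gt c
  set K : ℕ := max (max K0 K1) 1 with hK
  have hKK0 : K0 ≤ K := le_trans (le_max_left _ _) (le_max_left _ _)
  have hKK1 : c < K := lt_of_lt_of_le hK1 (by exact_mod_cast le_trans (le_max_right _ _) (le_max_left _ _))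
  have hK1' : 1 ≤ K := le_max_right _ _
  -- key step inequality
  have step : ∀ k : ℕ, K ≤ k → Real.log (r (k + 1)) ≤ Real.log (r k) - c / k := by
    intro k hk
    have hkpos : (0 : ℝ) < k := by
      have : (K : ℝ) ≤ k := by exact_mod_cast hk
      linarith
    have hck : c / k < 1 := by
      rw [div_lt_one hkpos]
      calc c < K := hKK1
        _ ≤ k := by exact_mod_cast hk
    have hexpr := hK0 k (le_trans hKK0 hk)
    have h1 : r (k + 1) < r k * (1 - c / k) := by
      have h2 : (k : ℝ) * (r (k + 1) - r k) / r k * (r k / k) < -c * (r k / k) := by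
        apply mul_lt_mul_of_pos_right hexpr
        exact div_pos (hr k) hkpos
      have hk0 : (k : ℝ) ≠ 0 := ne_of_gt hkpos
      have hr0 : r k ≠ 0 := ne_of_gt (hr k)
      have h3 : (k : ℝ) * (r (k + 1) - r k) / r k * (r k / k) = r (k + 1) - r k := by
        field_simp
      rw [h3] at h2
      have : -c * (r k / k) = r k * (1 - c / k) - r k := by ring
      linarith [this ▸ h2]
    have hpos1 : 0 < r k * (1 - c / k) := by
      have h4 : 0 < 1 - c / k := by linarith
      exact mul_pos (hr k) h4
    calc Real.log (r (k + 1)) ≤ Real.log (r k * (1 - c / k)) :=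
          Real.log_le_log (hr _) h1.le
      _ = Real.log (r k) + Real.log (1 - c / k) := Real.log_mul (ne_of_gt (hr k)) (by linarith [hck])
      _ ≤ Real.log (r k) + (1 - c / k - 1) := by
          have := Real.log_le_sub_one_of_pos (show (0:ℝ) < 1 - c / k by linarith)
          linarith
      _ = Real.log (r k) - c / k := by ring
  -- iterate
  have iter : ∀ m : ℕ, Real.log (r (K + m)) ≤
      Real.log (r K) - c * ∑ i ∈ Finset.range m, (1 : ℝ) / (K + i) := by
    intro m
    induction m with
    | zero => simp
    | succ m ih =>
      have hs := step (K + m) (Nat.le_add_right _ _)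
      have : Real.log (r (K + (m + 1))) ≤ Real.log (r (K + m)) - c / (K + m) := by
        have : K + (m + 1) = (K + m) + 1 := by ring
        rw [this]
        convert hs using 3
        push_cast; ring
      rw [Finset.sum_range_succ]
      have hdiv : c / ((K : ℝ) + m) = c * ((1:ℝ) / (K + m)) := by ring
      calc Real.log (r (K + (m + 1))) ≤ Real.log (r (K + m)) - c / (K + m) := this
        _ ≤ Real.log (r K) - c * ∑ i ∈ Finset.range m, (1 : ℝ) / (K + i) - c * (1 / (K + m)) := by
            rw [hdiv] at this ⊢; linarith
        _ = Real.log (r K) - c * ((∑ i ∈ Finset.range m, (1 : ℝ) / (K + i)) + 1 / (K + m)) := by ring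
  -- harmonic comparison
  have hsum : ∀ m : ℕ, (1 / (K : ℝ)) * ∑ i ∈ Finset.range m, (1 : ℝ) / (i + 1) ≤
      ∑ i ∈ Finset.range m, (1 : ℝ) / (K + i) := by
    intro m
    rw [Finset.mul_sum]
    apply Finset.sum_le_sum
    intro i _
    have hKpos : (0 : ℝ) < K := by exact_mod_cast Nat.lt_of_lt_of_le Nat.zero_lt_one hK1'
    have h1 : (K : ℝ) + i ≤ K * (i + 1) := by
      have : (1 : ℝ) ≤ K := by exact_mod_cast hK1'
      nlinarith
    rw [one_div, one_div, one_div, ← mul_inv]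
    apply inv_anti₀
    · positivity
    · exact h1
  -- tends to atBot
  have hH : Tendsto (fun m : ℕ => ∑ i ∈ Finset.range m, (1 : ℝ) / (i + 1)) atTop atTop :=
    Real.tendsto_sum_range_one_div_nat_succ_atTop
  have hKpos : (0 : ℝ) < K := by exact_mod_cast Nat.lt_of_lt_of_le Nat.zero_lt_one hK1'
  have hsumTop : Tendsto (fun m : ℕ => ∑ i ∈ Finset.range m, (1 : ℝ) / (K + i)) atTop atTop :=
    tendsto_atTop_mono hsum (Tendsto.const_mul_atTop (by positivity) hH)
  have hcsumTop : Tendsto (fun m : ℕ => c * ∑ i ∈ Finset.range m, (1 : ℝ) / (K + i)) atTop atTop :=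
    Tendsto.const_mul_atTop hcpos hsumTop
  have hlogbot : Tendsto (fun m : ℕ => Real.log (r (K + m))) atTop atBot := by
    apply tendsto_atBot_mono (fun m => iter m)
    simp only [sub_eq_add_neg]
    apply Filter.tendsto_atBot_add_const_left
    exact tendsto_neg_atTop_atBot.comp hcsumTop
  have hlogbot' : Tendsto (fun k : ℕ => Real.log (r k)) atTop atBot := by
    rw [← tendsto_add_atTop_iff_nat K]
    convert hlogbot using 2 with m
    rw [Nat.add_comm]
  have hexp : Tendsto (fun k : ℕ => Real.exp (Real.log (r k))) atTop (nhds 0) :=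
    Real.tendsto_exp_atBot.comp hlogbot'
  convert hexp using 2 with k
  rw [Real.exp_log (hr k)]

lemma upg_ratio (f g : ℕ → ℝ) (hf : ∀ k, 0 < f k) (hg : ∀ k, 0 < g k)
    (nf ng : ℝ)
    (hfu : Tendsto (fun k : ℕ => (k : ℝ) * (f (k + 1) - f k) / f k) atTop (nhds nf))
    (hgu : Tendsto (fun k : ℕ => (k : ℝ) * (g (k + 1) - g k) / g k) atTop (nhds ng)) :
    Tendsto (fun k : ℕ => (k : ℝ) * (g (k + 1) / f (k + 1) - g k / f k) / (g k / f k))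
      atTop (nhds (ng - nf)) := by
  set a : ℕ → ℝ := fun k => (k : ℝ) * (f (k + 1) - f k) / f k with ha
  set b : ℕ → ℝ := fun k => (k : ℝ) * (g (k + 1) - g k) / g k with hb
  have key : ∀ k : ℕ, (k : ℝ) * (g (k + 1) / f (k + 1) - g k / f k) / (g k / f k)
      = (b k - a k) * (f k / f (k + 1)) := by
    intro k
    have h1 : f k ≠ 0 := ne_of_gt (hf k)
    have h2 : f (k + 1) ≠ 0 := ne_of_gt (hf (k + 1))
    have h3 : g k ≠ 0 := ne_of_gt (hg k)
    simp only [ha, hb]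
    field_simp
    ring
  simp only [key]
  -- f k / f (k+1) → 1
  have hratio : Tendsto (fun k : ℕ => f k / f (k + 1)) atTop (nhds 1) := by
    have h1 : Tendsto (fun k : ℕ => f (k + 1) / f k) atTop (nhds 1) := by
      have h2 : Tendsto (fun k : ℕ => a k * (1 / (k : ℝ))) atTop (nhds (nf * 0)) :=
        hfu.mul tendsto_one_div_atTop_nhds_zero_nat
      rw [mul_zero] at h2
      have h3 : ∀ᶠ k : ℕ in atTop, a k * (1 / (k : ℝ)) + 1 = f (k + 1) / f k := by
        filter_upwards [eventually_ge_atTop 1] with k hk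
        have hk0 : (k : ℝ) ≠ 0 := by positivity
        have h1 : f k ≠ 0 := ne_of_gt (hf k)
        simp only [ha]
        field_simp
        ring
      have := (h2.add (tendsto_const_nhds (x := (1:ℝ)))).congr' h3
      rwa [zero_add] at this
    have h4 : Tendsto (fun k : ℕ => (f (k + 1) / f k)⁻¹) atTop (nhds 1⁻¹) :=
      h1.inv₀ (by norm_num)
    rw [inv_one] at h4
    convert h4 using 2 with k
    rw [inv_div]
  have := (hgu.sub hfu).mul hratio
  rwa [mul_one] at this

lemma upg_case (f g : ℕ → ℝ) (hf : ∀ k, 0 < f k) (hg : ∀ k, 0 < g k)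
    (nf ng : ℝ) (hle : ng ≤ nf)
    (hfu : Tendsto (fun k : ℕ => (k : ℝ) * (f (k + 1) - f k) / f k) atTop (nhds nf))
    (hgu : Tendsto (fun k : ℕ => (k : ℝ) * (g (k + 1) - g k) / g k) atTop (nhds ng)) :
    Tendsto (fun k : ℕ => (k : ℝ) * ((f (k + 1) + g (k + 1)) - (f k + g k)) / (f k + g k))
      atTop (nhds nf) := by
  set a : ℕ → ℝ := fun k => (k : ℝ) * (f (k + 1) - f k) / f k with ha
  set b : ℕ → ℝ := fun k => (k : ℝ) * (g (k + 1) - g k) / g k with hb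
  set w : ℕ → ℝ := fun k => f k / (f k + g k) with hw
  have hw01 : ∀ k, 0 ≤ w k ∧ w k ≤ 1 := by
    intro k
    constructor
    · exact div_nonneg (hf k).le (le_of_lt (add_pos (hf k) (hg k)))
    · rw [div_le_one (add_pos (hf k) (hg k))]; linarith [(hg k).le]
  have key : ∀ k : ℕ, (k : ℝ) * ((f (k + 1) + g (k + 1)) - (f k + g k)) / (f k + g k)
      = nf + (a k - nf) * w k + (b k - nf) * (1 - w k) := by
    intro k
    have h1 : f k ≠ 0 := ne_of_gt (hf k)
    have h3 : g k ≠ 0 := ne_of_gt (hg k)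
    have h5 : f k + g k ≠ 0 := ne_of_gt (add_pos (hf k) (hg k))
    simp only [ha, hb, hw]
    field_simp
    ring
  simp only [key]
  -- (a k - nf) * w k → 0
  have t1 : Tendsto (fun k : ℕ => (a k - nf) * w k) atTop (nhds 0) := by
    apply squeeze_zero_norm (a := fun k => ‖a k - nf‖)
    · intro k
      rw [norm_mul]
      have := (hw01 k)
      calc ‖a k - nf‖ * ‖w k‖ ≤ ‖a k - nf‖ * 1 := by
            apply mul_le_mul_of_nonneg_left _ (norm_nonneg _)
            rw [Real.norm_eq_abs, abs_le]; constructor <;> linarith [this.1, this.2]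
        _ = ‖a k - nf‖ := mul_one _
    · have : Tendsto (fun k => a k - nf) atTop (nhds 0) := by
        have := hfu.sub (tendsto_const_nhds (x := nf)); rwa [sub_self] at this
      simpa using this.norm
  -- (b k - nf) * (1 - w k) → 0
  have t2 : Tendsto (fun k : ℕ => (b k - nf) * (1 - w k)) atTop (nhds 0) := by
    rcases eq_or_lt_of_le hle with heq | hlt
    · -- ng = nf
      apply squeeze_zero_norm (a := fun k => ‖b k - nf‖)
      · intro k
        rw [norm_mul]
        have := (hw01 k)
        calc ‖b k - nf‖ * ‖1 - w k‖ ≤ ‖b k - nf‖ * 1 := by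
              apply mul_le_mul_of_nonneg_left _ (norm_nonneg _)
              rw [Real.norm_eq_abs, abs_le]; constructor <;> linarith [this.1, this.2]
          _ = ‖b k - nf‖ := mul_one _
      · have : Tendsto (fun k => b k - nf) atTop (nhds 0) := by
          rw [← heq]
          have := hgu.sub (tendsto_const_nhds (x := ng)); rwa [sub_self] at this
        simpa using this.norm
    · -- ng < nf : use decay of g/f
      have hrat : Tendsto (fun k => g k / f k) atTop (nhds 0) :=
        upg_decay _ (fun k => div_pos (hg k) (hf k)) (ng - nf) (by linarith)
          (upg_ratio f g hf hg nf ng hfu hgu)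
      have hwlim : Tendsto (fun k : ℕ => 1 - w k) atTop (nhds 0) := by
        apply squeeze_zero (fun k => by linarith [(hw01 k).2]) _ hrat
        intro k
        have h5 : (0:ℝ) < f k + g k := by have := hf k; have := hg k; positivity
        have : 1 - w k = g k / (f k + g k) := by
          simp only [hw]; field_simp; ring
        rw [this]
        apply div_le_div_of_nonneg_left (hg k).le (hf k)
        linarith [(hg k).le]
      have hb' : Tendsto (fun k => b k - nf) atTop (nhds (ng - nf)) :=
        hgu.sub tendsto_const_nhds
      have := hb'.mul hwlim
      rwa [mul_zero] at this
  have := (tendsto_const_nhds (x := nf)).add t1 |>.add t2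
  rwa [add_zero, add_zero] at this


/-- A positive function `f : ℕ → ℝ` is of uniform polynomial growth with
exponent `n` if `k * (f (k+1) - f k) / f k` tends to `n` as `k → ∞`. -/
def UniformPolyGrowth (f : ℕ → ℝ) (n : ℝ) : Prop :=
  Filter.Tendsto (fun k : ℕ => (k : ℝ) * (f (k + 1) - f k) / f k) Filter.atTop (nhds n)

theorem uniformPolyGrowth_add (f g : ℕ → ℝ) (hf : ∀ k, 0 < f k) (hg : ∀ k, 0 < g k)
    (nf ng : ℝ) (hfu : UniformPolyGrowth f nf) (hgu : UniformPolyGrowth g ng) :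
    UniformPolyGrowth (fun k => f k + g k) (max nf ng) := by
  unfold UniformPolyGrowth at *
  rcases le_total ng nf with h | h
  · rw [max_eq_left h]
    exact upg_case f g hf hg nf ng h hfu hgu
  · rw [max_eq_right h]
    have := upg_case g f hg hf ng nf h hgu hfu
    apply this.congr
    intro k
    simp only []
    ring
end

section
/- Let f : ℕ → ℝ with f(k) > 0 for all k be of uniform polynomial growth with exponent n_f, and let g : ℕ → ℕ with g(k) ≥ 1 for all k be of uniform polynomial growth (as a real-valued function) with exponent n_g. Then the composition f ∘ g is of uniform polynomial growth with exponent n_f · n_g. -/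
open Finset Real

section Aux


lemma prod_le_exp_sum (s : Finset ℕ) (t : ℕ → ℝ) (h : ∀ i ∈ s, |t i| ≤ 1) :
    ∏ i ∈ s, (1 + t i) ≤ Real.exp (∑ i ∈ s, |t i|) := by
  rw [Real.exp_sum]
  refine Finset.prod_le_prod (fun i hi => ?_) (fun i hi => ?_)
  · have := abs_le.1 (h i hi); linarith [this.1]
  · have := le_abs_self (t i); linarith [Real.add_one_le_exp (|t i|)]

lemma one_sub_sum_le_prod (s : Finset ℕ) (t : ℕ → ℝ) (h : ∀ i ∈ s, |t i| ≤ 1) :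
    1 - ∑ i ∈ s, |t i| ≤ ∏ i ∈ s, (1 + t i) := by
  classical
  induction s using Finset.induction_on with
  | empty => simp
  | @insert a s' hnotmem ih =>
    rw [Finset.prod_insert hnotmem, Finset.sum_insert hnotmem]
    have ha := h a (Finset.mem_insert_self a s')
    have h' : ∀ i ∈ s', |t i| ≤ 1 := fun i hi => h i (Finset.mem_insert_of_mem hi)
    have hP : 1 - ∑ i ∈ s', |t i| ≤ ∏ i ∈ s', (1 + t i) := ih h'
    have hPnn : (0:ℝ) ≤ ∏ i ∈ s', (1 + t i) := by
      refine Finset.prod_nonneg fun i hi => ?_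
      have := abs_le.1 (h' i hi); linarith [this.1]
    have hAnn : (0:ℝ) ≤ ∑ i ∈ s', |t i| := Finset.sum_nonneg fun i _ => abs_nonneg _
    have h1 : 1 - |t a| ≤ 1 + t a := by linarith [neg_abs_le (t a)]
    nlinarith [abs_nonneg (t a), (abs_le.1 ha).1]

lemma prod_sub_sum_le (s : Finset ℕ) (t : ℕ → ℝ) (h : ∀ i ∈ s, |t i| ≤ 1) :
    |∏ i ∈ s, (1 + t i) - 1 - ∑ i ∈ s, t i|
      ≤ Real.exp (∑ i ∈ s, |t i|) - 1 - ∑ i ∈ s, |t i| := by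
  classical
  induction s using Finset.induction_on with
  | empty => simp
  | @insert a s' hnotmem ih =>
    rw [Finset.prod_insert hnotmem, Finset.sum_insert hnotmem, Finset.sum_insert hnotmem]
    have ha := h a (Finset.mem_insert_self a s')
    have h' : ∀ i ∈ s', |t i| ≤ 1 := fun i hi => h i (Finset.mem_insert_of_mem hi)
    set P := ∏ i ∈ s', (1 + t i) with hPdef
    set S := ∑ i ∈ s', t i with hSdef
    set A := ∑ i ∈ s', |t i| with hAdef
    have hD : |P - 1 - S| ≤ Real.exp A - 1 - A := ih h'
    have hup : P ≤ Real.exp A := prod_le_exp_sum s' t h'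
    have hlo : 1 - A ≤ P := one_sub_sum_le_prod s' t h'
    have hA1 : A + 1 ≤ Real.exp A := Real.add_one_le_exp A
    have hPb : |P - 1| ≤ Real.exp A - 1 := by
      rw [abs_le]; constructor <;> linarith
    have key : (1 + t a) * P - 1 - (t a + S) = (P - 1 - S) + t a * (P - 1) := by ring
    rw [key]
    have hexp : Real.exp A * (|t a| + 1) ≤ Real.exp (|t a| + A) := by
      rw [Real.exp_add]
      have := Real.add_one_le_exp (|t a|)
      nlinarith [Real.exp_pos A]
    calc |(P - 1 - S) + t a * (P - 1)| ≤ |P - 1 - S| + |t a * (P - 1)| := abs_add_le _ _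
      _ = |P - 1 - S| + |t a| * |P - 1| := by rw [abs_mul]
      _ ≤ (Real.exp A - 1 - A) + |t a| * (Real.exp A - 1) := by
          have := abs_nonneg (t a)
          have h2 : |t a| * |P - 1| ≤ |t a| * (Real.exp A - 1) :=
            mul_le_mul_of_nonneg_left hPb this
          linarith
      _ ≤ Real.exp (|t a| + A) - 1 - (|t a| + A) := by nlinarith

lemma exp_quad {x : ℝ} (h0 : 0 ≤ x) (h1 : x ≤ 1) : Real.exp x - 1 - x ≤ x ^ 2 := by
  have hb := Real.exp_bound (x := x) (by rw [abs_of_nonneg h0]; exact h1) (n := 2) (by norm_num)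
  have hsum : ∑ m ∈ Finset.range 2, x ^ m / (m.factorial : ℝ) = 1 + x := by
    simp [Finset.sum_range_succ]
  rw [hsum, abs_of_nonneg h0] at hb
  have := abs_le.1 hb
  norm_num at this
  nlinarith [this.2]

lemma prod_le_exp_sum' (s : Finset ℕ) (t : ℕ → ℝ) (h : ∀ i ∈ s, |t i| ≤ 1) :
    ∏ i ∈ s, (1 + t i) ≤ Real.exp (∑ i ∈ s, |t i|) := by
  rw [Real.exp_sum]
  refine Finset.prod_le_prod (fun i hi => ?_) (fun i hi => ?_)
  · have := abs_le.1 (h i hi); linarith [this.1]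
  · have := le_abs_self (t i); linarith [Real.add_one_le_exp (|t i|)]

lemma prod_approx (s : Finset ℕ) (t : ℕ → ℝ) (hA : ∑ i ∈ s, |t i| ≤ 1) :
    |∏ i ∈ s, (1 + t i) - 1 - ∑ i ∈ s, t i| ≤ (∑ i ∈ s, |t i|) ^ 2 := by
  have h : ∀ i ∈ s, |t i| ≤ 1 := fun i hi =>
    le_trans (Finset.single_le_sum (fun j _ => abs_nonneg (t j)) hi) hA
  have h1 := prod_sub_sum_le s t h
  have h2 := exp_quad (Finset.sum_nonneg fun i _ => abs_nonneg (t i)) hA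
  linarith

lemma telescope_ratio (f : ℕ → ℝ) (hf : ∀ k, 0 < f k) :
    ∀ c d : ℕ, c ≤ d → ∏ j ∈ Finset.Ico c d, (f (j + 1) / f j) = f d / f c := by
  intro c d hcd
  induction d, hcd using Nat.le_induction with
  | base => simp [div_self (hf c).ne']
  | succ d hcd ih =>
      rw [Finset.prod_Ico_succ_top hcd, ih, div_mul_div_comm, mul_comm (f c) (f d)]
      exact mul_div_mul_left _ _ (hf d).ne'

end Aux

lemma key_est (f : ℕ → ℝ) (hf : ∀ k, 0 < f k) (nf : ℝ) (hfu : UniformPolyGrowth f nf)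
    (ε₀ : ℝ) (hε₀ : 0 < ε₀) (hε₁ : ε₀ ≤ 1) :
    ∃ N : ℕ, 1 ≤ N ∧ ∀ c d : ℕ, N ≤ c → c ≤ d → (|nf| + 1) * ((d : ℝ) - c) ≤ c →
      |f d / f c - 1 - nf * (((d : ℝ) - c) / c)|
        ≤ 2 * (|nf| + 1) ^ 2 * (((d : ℝ) - c) / c) ^ 2 + ε₀ * (((d : ℝ) - c) / c) := by
  obtain ⟨N₀, hN₀⟩ := Metric.tendsto_atTop.1 hfu ε₀ hε₀
  refine ⟨N₀ + 1, Nat.le_add_left 1 N₀, fun c d hc hcd hMd => ?_⟩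
  set M : ℝ := |nf| + 1 with hMdef
  have hM1 : (1:ℝ) ≤ M := by rw [hMdef]; linarith [abs_nonneg nf]
  have hc1 : 1 ≤ c := le_trans (Nat.le_add_left 1 N₀) hc
  have hc0 : (0:ℝ) < c := by exact_mod_cast hc1
  set m : ℝ := (d : ℝ) - c with hmdef
  have hm0 : 0 ≤ m := by
    have : (c:ℝ) ≤ d := by exact_mod_cast hcd
    linarith
  set t : ℕ → ℝ := fun j => (f (j + 1) - f j) / f j with htdef
  -- pointwise bounds
  have hpt : ∀ j ∈ Finset.Ico c d, |t j - nf / c| ≤ ε₀ / c + M * m / c ^ 2 ∧ |t j| ≤ M / c := by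
    intro j hj
    obtain ⟨hcj, hjd⟩ := Finset.mem_Ico.1 hj
    have hj1 : 1 ≤ j := le_trans hc1 hcj
    have hj0 : (0:ℝ) < j := by exact_mod_cast hj1
    have hcjR : (c:ℝ) ≤ j := by exact_mod_cast hcj
    have hjm : (j:ℝ) - c ≤ m := by
      have : (j:ℝ) < d := by exact_mod_cast hjd
      simp only [hmdef]; linarith
    have habs : |(j:ℝ) * t j - nf| ≤ ε₀ := by
      have h1 := hN₀ j (le_trans (Nat.le_succ N₀) (le_trans hc hcj))
      rw [Real.dist_eq] at h1
      have h2 : (j:ℝ) * (f (j + 1) - f j) / f j = (j:ℝ) * t j := mul_div_assoc _ _ _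
      rw [h2] at h1
      exact h1.le
    have ht1 : |t j - nf / j| ≤ ε₀ / c := by
      have heq : t j - nf / j = ((j:ℝ) * t j - nf) / j := by field_simp
      rw [heq, abs_div, abs_of_pos hj0]
      exact div_le_div₀ hε₀.le habs hc0 hcjR
    constructor
    · have hnfM : |nf| ≤ M := by rw [hMdef]; linarith
      have h3 : |nf / j - nf / c| ≤ M * m / c ^ 2 := by
        have heq : nf / (j:ℝ) - nf / c = nf * (((c:ℝ) - j) / (j * c)) := by
          field_simp
        rw [heq, abs_mul]
        have h5 : |((c:ℝ) - j) / (j * c)| ≤ m / c ^ 2 := by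
          rw [abs_div, abs_sub_comm, abs_of_nonneg (by linarith : (0:ℝ) ≤ (j:ℝ) - c),
            abs_of_pos (mul_pos hj0 hc0), div_le_div_iff₀ (mul_pos hj0 hc0) (by positivity)]
          nlinarith [mul_nonneg (mul_nonneg hm0 hc0.le) (by linarith : (0:ℝ) ≤ (j:ℝ) - c),
            mul_nonneg (by linarith : (0:ℝ) ≤ m - ((j:ℝ) - c)) (sq_nonneg (c:ℝ))]
        calc |nf| * |((c:ℝ) - j) / (j * c)| ≤ M * (m / c ^ 2) :=
              mul_le_mul hnfM h5 (abs_nonneg _) (by linarith)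
          _ = M * m / c ^ 2 := by ring
      calc |t j - nf / c| ≤ |t j - nf / j| + |nf / j - nf / c| := by
            have := abs_add_le (t j - nf / j) (nf / j - nf / c)
            simpa using abs_sub_le (t j) (nf / j) (nf / c)
        _ ≤ ε₀ / c + M * m / c ^ 2 := add_le_add ht1 h3
    · have : |nf / j| ≤ |nf| / c := by
        rw [abs_div, abs_of_pos hj0]
        apply div_le_div₀ (abs_nonneg nf) le_rfl hc0 hcjR
      calc |t j| ≤ |t j - nf / j| + |nf / j| := by
            simpa using abs_add_le (t j - nf / j) (nf / j)
        _ ≤ ε₀ / c + |nf| / c := add_le_add ht1 this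
        _ ≤ M / c := by
            rw [← add_div]
            apply div_le_div₀ (by linarith) (by rw [hMdef]; linarith) hc0 le_rfl
  set A : ℝ := ∑ j ∈ Finset.Ico c d, |t j| with hAdef
  set S : ℝ := ∑ j ∈ Finset.Ico c d, t j with hSdef
  have hcardR : ((Finset.Ico c d).card : ℝ) = m := by
    rw [Nat.card_Ico, Nat.cast_sub hcd]
  have hA1 : A ≤ M * m / c := by
    have := Finset.sum_le_card_nsmul (Finset.Ico c d) (fun j => |t j|) (M / c)
      (fun j hj => (hpt j hj).2)
    rw [nsmul_eq_mul, hcardR] at this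
    calc A ≤ m * (M / c) := this
      _ = M * m / c := by ring
  have hA2 : A ≤ 1 := by
    refine hA1.trans ?_
    rw [div_le_one hc0]
    linarith [hMd]
  have hA0 : 0 ≤ A := Finset.sum_nonneg fun j _ => abs_nonneg _
  have hprod : ∏ j ∈ Finset.Ico c d, (1 + t j) = f d / f c := by
    rw [← telescope_ratio f hf c d hcd]
    refine Finset.prod_congr rfl fun j _ => ?_
    show 1 + (f (j + 1) - f j) / f j = f (j + 1) / f j
    field_simp [(hf j).ne']; ring
  have hE : |f d / f c - 1 - S| ≤ (M * m / c) ^ 2 := by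
    have h1 := prod_approx (Finset.Ico c d) t hA2
    rw [hprod] at h1
    exact h1.trans (pow_le_pow_left₀ hA0 hA1 2)
  have hS : |S - nf * (m / c)| ≤ m * (ε₀ / c + M * m / c ^ 2) := by
    have heq : S - nf * (m / c) = ∑ j ∈ Finset.Ico c d, (t j - nf / c) := by
      rw [Finset.sum_sub_distrib, Finset.sum_const, nsmul_eq_mul, hcardR]
      ring
    rw [heq]
    calc |∑ j ∈ Finset.Ico c d, (t j - nf / c)| ≤ ∑ j ∈ Finset.Ico c d, |t j - nf / c| :=
          Finset.abs_sum_le_sum_abs _ _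
      _ ≤ m * (ε₀ / c + M * m / c ^ 2) := by
          have := Finset.sum_le_card_nsmul (Finset.Ico c d) (fun j => |t j - nf / c|)
            (ε₀ / c + M * m / c ^ 2) (fun j hj => (hpt j hj).1)
          rwa [nsmul_eq_mul, hcardR] at this
  calc |f d / f c - 1 - nf * (m / c)|
      ≤ |f d / f c - 1 - S| + |S - nf * (m / c)| := by
        have := abs_add_le (f d / f c - 1 - S) (S - nf * (m / c))
        simpa using abs_sub_le (f d / f c - 1) S (nf * (m / c))
    _ ≤ (M * m / c) ^ 2 + m * (ε₀ / c + M * m / c ^ 2) := add_le_add hE hS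
    _ ≤ 2 * M ^ 2 * (m / c) ^ 2 + ε₀ * (m / c) := by
        have e1 : (M * m / c) ^ 2 = M ^ 2 * (m / c) ^ 2 := by ring
        have e2 : m * (ε₀ / c + M * m / c ^ 2) = ε₀ * (m / c) + M * (m / c) ^ 2 := by ring
        have h4 : M * (m / c) ^ 2 ≤ M ^ 2 * (m / c) ^ 2 := by
          nlinarith [sq_nonneg (m / c)]
        linarith

set_option maxHeartbeats 800000 in
theorem uniformPolyGrowth_comp (f : ℕ → ℝ) (hf : ∀ k, 0 < f k)
    (g : ℕ → ℕ) (hg : ∀ k, 1 ≤ g k)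
    (nf ng : ℝ) (hfu : UniformPolyGrowth f nf)
    (hgu : UniformPolyGrowth (fun k => (g k : ℝ)) ng) :
    UniformPolyGrowth (fun k => f (g k)) (nf * ng) := by
  rw [UniformPolyGrowth, Metric.tendsto_atTop]
  intro ε hε
  set M : ℝ := |nf| + 1 with hMdef
  set G : ℝ := |ng| + 1 with hGdef
  have hM1 : (1:ℝ) ≤ M := by rw [hMdef]; linarith [abs_nonneg nf]
  have hG1 : (1:ℝ) ≤ G := by rw [hGdef]; linarith [abs_nonneg ng]
  have hM0 : (0:ℝ) < M := by linarith
  have hG0 : (0:ℝ) < G := by linarith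
  have hMG1 : (1:ℝ) ≤ M * G := by nlinarith
  set D : ℝ := 4 * G + 8 * M * G ^ 2 + M with hDdef
  set E : ℝ := 60 * M ^ 3 * G ^ 3 with hEdef
  have hD1 : (1:ℝ) ≤ D := by
    rw [hDdef]; nlinarith [mul_nonneg hM0.le (sq_nonneg G)]
  have hE0 : (0:ℝ) ≤ E := by
    rw [hEdef]; nlinarith [mul_pos (pow_pos hM0 3) (pow_pos hG0 3)]
  set ε₀ : ℝ := min (min 1 (1 / (8 * G))) (ε / (2 * D)) with hε₀def
  have hε₀pos : 0 < ε₀ := by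
    rw [hε₀def]
    refine lt_min (lt_min one_pos (by positivity)) (by positivity)
  have hε₀1 : ε₀ ≤ 1 := le_trans (min_le_left _ _) (min_le_left _ _)
  have hε₀G : ε₀ ≤ 1 / (8 * G) := le_trans (min_le_left _ _) (min_le_right _ _)
  have hε₀D : D * ε₀ ≤ ε / 2 := by
    have h1 : ε₀ ≤ ε / (2 * D) := min_le_right _ _
    have hD0 : (0:ℝ) < D := by linarith
    calc D * ε₀ ≤ D * (ε / (2 * D)) := mul_le_mul_of_nonneg_left h1 hD0.le
      _ = ε / 2 := by field_simp
  clear_value M G D E ε₀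
  obtain ⟨N₁, hN₁1, hKey⟩ := key_est f hf nf hfu ε₀ hε₀pos hε₀1
  obtain ⟨N₂, hN₂⟩ := Metric.tendsto_atTop.1 hgu ε₀ hε₀pos
  obtain ⟨N₃, hN₃⟩ := exists_nat_ge (max (max (2 * G * ((N₁:ℝ) + 1)) (64 * M ^ 2 * G ^ 2))
    (2 * E / ε + 1))
  refine ⟨max N₂ N₃, fun k hk => ?_⟩
  set K : ℝ := (k : ℝ) with hKdef
  have hkN₃ : (N₃ : ℝ) ≤ K := by
    rw [hKdef]; exact_mod_cast le_trans (le_max_right N₂ N₃) hk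
  have hKN : 2 * G * ((N₁:ℝ) + 1) ≤ K :=
    le_trans (le_trans (le_max_left _ _) (le_max_left _ _)) (le_trans hN₃ hkN₃)
  have hK64 : 64 * M ^ 2 * G ^ 2 ≤ K :=
    le_trans (le_trans (le_max_right _ _) (le_max_left _ _)) (le_trans hN₃ hkN₃)
  have hKE : 2 * E / ε + 1 ≤ K := le_trans (le_max_right _ _) (le_trans hN₃ hkN₃)
  have hMG64 : (64:ℝ) ≤ 64 * M ^ 2 * G ^ 2 := by
    nlinarith [hMG1, sq_nonneg (M * G - 1)]
  have hK1 : (1:ℝ) ≤ K := by linarith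
  have hK0 : (0:ℝ) < K := by linarith
  have hEK : E / K < ε / 2 := by
    rw [div_lt_iff₀ hK0]
    have h2 : 2 * E / ε < K := by linarith
    rw [div_lt_iff₀ hε] at h2
    linarith
  -- the g-estimate at k
  have hgk : |K * ((g (k+1) : ℝ) - (g k : ℝ)) / (g k : ℝ) - ng| ≤ ε₀ := by
    have := hN₂ k (le_trans (le_max_left N₂ N₃) hk)
    rw [Real.dist_eq] at this
    exact this.le
  set a : ℕ := g k with hadef
  set b : ℕ := g (k+1) with hbdef
  have ha1 : 1 ≤ a := hg k
  have hb1 : 1 ≤ b := hg (k+1)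
  have haR : (0:ℝ) < a := by exact_mod_cast ha1
  have hbR : (0:ℝ) < b := by exact_mod_cast hb1
  rw [Real.dist_eq]
  clear_value K a b
  show |K * (f b - f a) / f a - nf * ng| < ε
  have hnfM : |nf| ≤ M := by rw [hMdef]; linarith
  have hngG : |ng| ≤ G := by rw [hGdef]; linarith
  have hfa0 : (0:ℝ) < f a := hf a
  rcases Nat.lt_trichotomy a b with hab | hab | hab
  · -- a < b
    have habR : (a:ℝ) < b := by exact_mod_cast hab
    set m : ℝ := (b:ℝ) - a with hmdef
    have hm1 : (1:ℝ) ≤ m := by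
      have h1 : a + 1 ≤ b := hab
      have h2 : ((a:ℝ)) + 1 ≤ b := by exact_mod_cast h1
      rw [hmdef]; linarith
    have hm0 : (0:ℝ) ≤ m := by linarith
    have hu : |K * m / a - ng| ≤ ε₀ := hgk
    clear_value m
    have hug : K * m / a ≤ G := by
      have h := (abs_le.1 hu).2
      rw [hGdef]; linarith [le_abs_self ng]
    have hmak : K * m ≤ G * a := by
      rw [div_le_iff₀ haR] at hug; linarith
    have hKGa : K ≤ G * a := by
      have h9 : (0:ℝ) ≤ K * (m - 1) := mul_nonneg hK0.le (by linarith)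
      nlinarith
    have hN₁a : N₁ ≤ a := by
      have h2 : 2 * ((N₁:ℝ) + 1) ≤ a :=
        le_of_mul_le_mul_left (by linarith) hG0
      have h3 : (N₁:ℝ) < a := by linarith
      exact_mod_cast h3.le
    have hMGK : M * G ≤ K := by
      have h9 : M * G ≤ 64 * M ^ 2 * G ^ 2 := by nlinarith [sq_nonneg (M * G - 1)]
      linarith
    have hMm : M * m ≤ (a:ℝ) := by
      have h2 : G * (M * m) ≤ G * a := by
        have h9 := mul_le_mul_of_nonneg_right hMGK hm0
        linarith
      exact le_of_mul_le_mul_left h2 hG0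
    have hkey := hKey a b hN₁a (le_of_lt hab) (by rw [← hMdef, ← hmdef]; exact hMm)
    rw [← hMdef, ← hmdef] at hkey
    set v : ℝ := m / a with hvdef
    have hv0 : (0:ℝ) ≤ v := div_nonneg hm0 haR.le
    clear_value v
    have hmd : K * m / a = K * v := by rw [hvdef, mul_div_assoc]
    have hvK : K * v ≤ G := by rw [← hmd]; exact hug
    have hvG : v ≤ G / K := by
      rw [le_div_iff₀ hK0, mul_comm]; exact hvK
    have hu' : |K * v - ng| ≤ ε₀ := by rw [← hmd]; exact hu
    have hX : K * (f b - f a) / f a = K * (f b / f a - 1) := by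
      field_simp
    rw [hX]
    have hdecomp : K * (f b / f a - 1) - nf * ng
        = K * (f b / f a - 1 - nf * v) + nf * (K * v - ng) := by ring
    have h6 : v * (K * v) ≤ (G / K) * G :=
      mul_le_mul hvG hvK (mul_nonneg hK0.le hv0) (le_of_lt (div_pos hG0 hK0))
    have hstep : |K * (f b / f a - 1) - nf * ng|
        ≤ 2 * M ^ 2 * ((G / K) * G) + ε₀ * G + M * ε₀ := by
      calc |K * (f b / f a - 1) - nf * ng|
          ≤ |K * (f b / f a - 1 - nf * v)| + |nf * (K * v - ng)| := by
            rw [hdecomp]; exact abs_add_le _ _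
        _ = K * |f b / f a - 1 - nf * v| + |nf| * |K * v - ng| := by
            rw [abs_mul, abs_mul, abs_of_pos hK0]
        _ ≤ K * (2 * M ^ 2 * v ^ 2 + ε₀ * v) + M * ε₀ :=
            add_le_add (mul_le_mul_of_nonneg_left hkey hK0.le)
              (mul_le_mul hnfM hu' (abs_nonneg _) (by linarith))
        _ ≤ 2 * M ^ 2 * ((G / K) * G) + ε₀ * G + M * ε₀ := by
            have e : K * (2 * M ^ 2 * v ^ 2 + ε₀ * v)
                = 2 * M ^ 2 * (v * (K * v)) + ε₀ * (K * v) := by ring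
            rw [e]
            have h7 : ε₀ * (K * v) ≤ ε₀ * G := mul_le_mul_of_nonneg_left hvK hε₀pos.le
            have h8 : 2 * M ^ 2 * (v * (K * v)) ≤ 2 * M ^ 2 * ((G / K) * G) :=
              mul_le_mul_of_nonneg_left h6 (by positivity)
            linarith
    have hEbound : 2 * M ^ 2 * ((G / K) * G) ≤ E / K := by
      have e : 2 * M ^ 2 * ((G / K) * G) = (2 * M ^ 2 * G ^ 2) / K := by ring
      rw [e, hEdef]
      refine div_le_div₀ (by positivity) ?_ hK0 le_rfl
      have h9 : (1:ℝ) ≤ 30 * (M * G) := by linarith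
      calc 2 * M ^ 2 * G ^ 2 = 2 * M ^ 2 * G ^ 2 * 1 := by ring
        _ ≤ 2 * M ^ 2 * G ^ 2 * (30 * (M * G)) :=
            mul_le_mul_of_nonneg_left h9 (by positivity)
        _ = 60 * M ^ 3 * G ^ 3 := by ring
    have hDbound : ε₀ * G + M * ε₀ ≤ D * ε₀ := by
      rw [hDdef]
      have h9 : (0:ℝ) ≤ 3 * G + 8 * M * G ^ 2 := by
        have := mul_nonneg (mul_nonneg (by norm_num : (0:ℝ) ≤ 8) hM0.le) (sq_nonneg G)
        linarith
      have h10 : 0 ≤ (3 * G + 8 * M * G ^ 2) * ε₀ := mul_nonneg h9 hε₀pos.le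
      linarith
    calc |K * (f b / f a - 1) - nf * ng|
        ≤ E / K + D * ε₀ := by linarith
      _ < ε := by linarith
  · -- a = b
    have h0 : K * (f b - f a) / f a = 0 := by rw [← hab]; simp
    have hng : |ng| ≤ ε₀ := by
      rw [← hab] at hgk; simpa using hgk
    rw [h0]
    have h1 : |(0:ℝ) - nf * ng| = |nf| * |ng| := by
      rw [zero_sub, abs_neg, abs_mul]
    rw [h1]
    have h2 : |nf| * |ng| ≤ M * ε₀ :=
      mul_le_mul hnfM hng (abs_nonneg _) (by linarith)
    have h3 : M * ε₀ ≤ D * ε₀ := by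
      rw [hDdef]
      have h9 : (0:ℝ) ≤ 4 * G + 8 * M * G ^ 2 := by
        have := mul_nonneg (mul_nonneg (by norm_num : (0:ℝ) ≤ 8) hM0.le) (sq_nonneg G)
        linarith
      have h10 : 0 ≤ (4 * G + 8 * M * G ^ 2) * ε₀ := mul_nonneg h9 hε₀pos.le
      linarith
    have hEK0 : 0 < ε / 2 := by linarith
    calc |nf| * |ng| ≤ D * ε₀ := le_trans h2 h3
      _ ≤ ε / 2 := hε₀D
      _ < ε := by linarith
  · -- b < a
    have hbaR : (b:ℝ) < a := by exact_mod_cast hab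
    set m : ℝ := (a:ℝ) - b with hmdef
    have hm1 : (1:ℝ) ≤ m := by
      have h1 : b + 1 ≤ a := hab
      have h2 : ((b:ℝ)) + 1 ≤ a := by exact_mod_cast h1
      rw [hmdef]; linarith
    have hm0 : (0:ℝ) ≤ m := by linarith
    have hgk' : |K * m / a + ng| ≤ ε₀ := by
      have e : K * ((b:ℝ) - a) / a = -(K * m / a) := by rw [hmdef]; ring
      rw [e] at hgk
      have e2 : -(K * m / ↑a) - ng = -(K * m / ↑a + ng) := by ring
      rwa [e2, abs_neg] at hgk
    clear_value m
    have hug : K * m / a ≤ G := by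
      have h := (abs_le.1 hgk').2
      rw [hGdef]; linarith [neg_abs_le ng]
    have hmak : K * m ≤ G * a := by
      rw [div_le_iff₀ haR] at hug; linarith
    have hKGa : K ≤ G * a := by
      have h9 : (0:ℝ) ≤ K * (m - 1) := mul_nonneg hK0.le (by linarith)
      linarith only [h9, hmak]
    have hab2 : (a:ℝ) ≤ 2 * b := by
      -- from 2G ≤ K : 2G*m ≤ K*m ≤ G*a ⇒ 2m ≤ a ⇒ a ≤ 2b
      have hM2 : (1:ℝ) ≤ M ^ 2 := by linarith [sq_nonneg (M - 1)]
      have hGK : 2 * G ≤ K := by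
        have h9 : (0:ℝ) ≤ (64 * M ^ 2 - 2) * G ^ 2 :=
          mul_nonneg (by linarith) (sq_nonneg G)
        have h10 : (0:ℝ) ≤ 2 * G * (G - 1) :=
          mul_nonneg (by linarith) (by linarith)
        linarith only [h9, h10, hK64]
      have h9 := mul_le_mul_of_nonneg_right hGK hm0
      have h11 : G * (2 * m) ≤ G * a := by linarith
      have h12 : 2 * m ≤ (a:ℝ) := le_of_mul_le_mul_left h11 hG0
      have h13 : (b:ℝ) = a - m := by rw [hmdef]; ring
      linarith
    have hGab := mul_le_mul_of_nonneg_left hab2 hG0.le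
    have hN₁b : N₁ ≤ b := by
      have h9 : G * (2 * ((N₁:ℝ) + 1)) ≤ G * (2 * b) := by linarith
      have h10 : 2 * ((N₁:ℝ) + 1) ≤ 2 * b := le_of_mul_le_mul_left h9 hG0
      have h11 : (N₁:ℝ) < b := by linarith
      exact_mod_cast h11.le
    have hMm : M * m ≤ (b:ℝ) := by
      have h2MG : 2 * (M * G) ≤ K := by
        have h9 : (0:ℝ) ≤ 2 * (M * G) * (32 * (M * G) - 1) :=
          mul_nonneg (by linarith) (by linarith)
        linarith only [h9, hK64]
      have h9 := mul_le_mul_of_nonneg_right h2MG hm0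
      have h11 : (2 * G) * (M * m) ≤ (2 * G) * b := by linarith
      exact le_of_mul_le_mul_left h11 (by linarith)
    have hkey := hKey b a hN₁b (le_of_lt hab) (by rw [← hMdef, ← hmdef]; exact hMm)
    rw [← hMdef, ← hmdef] at hkey
    set v : ℝ := m / (b:ℝ) with hvdef
    have hv0 : (0:ℝ) ≤ v := div_nonneg hm0 hbR.le
    have hvK : K * v ≤ 2 * G := by
      rw [hvdef, ← mul_div_assoc, div_le_iff₀ hbR]
      linarith
    have hvG : v ≤ 2 * G / K := by
      rw [le_div_iff₀ hK0, mul_comm]; exact hvK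
    have hKv0 : 0 ≤ K * v := mul_nonneg hK0.le hv0
    have hung : |K * v + ng| ≤ ε₀ + 2 * G ^ 2 / K := by
      have e1 : K * v - K * m / a = K * m * m / (a * b) := by
        rw [hvdef, hmdef]
        field_simp
      have h12 : K * m * m ≤ G * a * m := mul_le_mul_of_nonneg_right hmak hm0
      have h13 : K * m * m / ((a:ℝ) * b) ≤ G * a * m / ((a:ℝ) * b) :=
        (div_le_div_iff_of_pos_right (mul_pos haR hbR)).2 h12
      have e3 : G * (a:ℝ) * m / ((a:ℝ) * b) = G * v := by
        rw [hvdef]; field_simp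
      have h14 : G * v ≤ G * (2 * G / K) := mul_le_mul_of_nonneg_left hvG hG0.le
      have e4 : G * (2 * G / K) = 2 * G ^ 2 / K := by ring
      have h16 : |K * v - K * m / ↑a| ≤ 2 * G ^ 2 / K := by
        rw [e1, abs_of_nonneg (div_nonneg (mul_nonneg (mul_nonneg hK0.le hm0) hm0)
          (mul_pos haR hbR).le)]
        rw [e3] at h13
        linarith
      have e5 : K * v + ng = (K * m / ↑a + ng) + (K * v - K * m / ↑a) := by ring
      calc |K * v + ng| ≤ |K * m / ↑a + ng| + |K * v - K * m / ↑a| := by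
            rw [e5]; exact abs_add_le _ _
        _ ≤ ε₀ + 2 * G ^ 2 / K := add_le_add hgk' h16
    clear_value v
    set Q : ℝ := f a / f b - 1 with hQdef
    have hPQ : 1 + Q = f a / f b := by rw [hQdef]; ring
    clear_value Q
    have hβ0 : 0 ≤ 2 * M ^ 2 * v ^ 2 + ε₀ * v :=
      add_nonneg (by positivity) (mul_nonneg hε₀pos.le hv0)
    have hβK : K * (2 * M ^ 2 * v ^ 2 + ε₀ * v) ≤ 8 * M ^ 2 * G ^ 2 / K + 2 * G * ε₀ := by
      have h6 : v * (K * v) ≤ (2 * G / K) * (2 * G) :=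
        mul_le_mul hvG hvK hKv0 (le_of_lt (div_pos (by linarith) hK0))
      have h7 : ε₀ * (K * v) ≤ ε₀ * (2 * G) := mul_le_mul_of_nonneg_left hvK hε₀pos.le
      have h8 : 2 * M ^ 2 * (v * (K * v)) ≤ 2 * M ^ 2 * ((2 * G / K) * (2 * G)) :=
        mul_le_mul_of_nonneg_left h6 (by positivity)
      have e : K * (2 * M ^ 2 * v ^ 2 + ε₀ * v) = 2 * M ^ 2 * (v * (K * v)) + ε₀ * (K * v) := by
        ring
      have e2 : 2 * M ^ 2 * ((2 * G / K) * (2 * G)) = 8 * M ^ 2 * G ^ 2 / K := by ring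
      linarith
    have hQv : |Q| ≤ M * v + (2 * M ^ 2 * v ^ 2 + ε₀ * v) := by
      calc |Q| = |(Q - nf * v) + nf * v| := by rw [sub_add_cancel]
        _ ≤ |Q - nf * v| + |nf * v| := abs_add_le _ _
        _ ≤ (2 * M ^ 2 * v ^ 2 + ε₀ * v) + M * v := by
            refine add_le_add hkey ?_
            rw [abs_mul, abs_of_nonneg hv0]
            exact mul_le_mul_of_nonneg_right hnfM hv0
        _ = M * v + (2 * M ^ 2 * v ^ 2 + ε₀ * v) := by ring
    have h8a : 8 * M ^ 2 * G ^ 2 / K ≤ 1 / 8 := by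
      rw [div_le_iff₀ hK0]; linarith only [hK64]
    have h2Gε : 2 * G * ε₀ ≤ 1 / 4 := by
      have h9 := mul_le_mul_of_nonneg_left hε₀G (by linarith : (0:ℝ) ≤ 2 * G)
      have e : 2 * G * (1 / (8 * G)) = 1 / 4 := by field_simp; ring
      linarith only [h9, e]
    have hβself : 2 * M ^ 2 * v ^ 2 + ε₀ * v ≤ 8 * M ^ 2 * G ^ 2 / K + 2 * G * ε₀ := by
      have h9 := mul_le_mul_of_nonneg_right hK1 hβ0
      linarith only [h9, hβK]
    have hMvb : M * v ≤ 2 * M * G / K := by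
      have h9 := mul_le_mul_of_nonneg_left hvG hM0.le
      have e : M * (2 * G / K) = 2 * M * G / K := by ring
      linarith only [h9, e]
    have hMv16 : M * v ≤ 1 / 16 := by
      have h9 : 32 * (M * G) ≤ K := by
        have h10 : (0:ℝ) ≤ (M * G) * (32 * (M * G) - 32) :=
          mul_nonneg (by linarith) (by linarith)
        linarith only [h10, hK64, sq_nonneg (M * G)]
      have h11 : M * (K * v) ≤ M * (2 * G) := mul_le_mul_of_nonneg_left hvK hM0.le
      have h12 : K * (M * v) ≤ K * (1 / 16) := by linarith only [h9, h11]
      exact le_of_mul_le_mul_left h12 hK0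
    have hQhalf : |Q| ≤ 1 / 2 := by linarith only [hMv16, hβself, hQv, h8a, h2Gε]
    have hP0 : (0:ℝ) < 1 + Q := by
      have h := abs_le.1 hQhalf; linarith only [h.1, h.2]
    have hPhalf : (1:ℝ) / 2 ≤ 1 + Q := by
      have h := abs_le.1 hQhalf; linarith only [h.1, h.2]
    have hfb : f b / f a = 1 / (1 + Q) := by
      rw [hPQ, one_div_div]
    have hX : K * (f b - f a) / f a = K * (1 / (1 + Q) - 1) := by
      rw [← hfb]
      field_simp
    rw [hX]
    have hdecomp : K * (1 / (1 + Q) - 1) - nf * ng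
        = -((K * Q - nf * (K * v)) / (1 + Q)) - (nf * (K * v)) * (1 / (1 + Q) - 1)
          - nf * ((K * v) + ng) := by
      field_simp
      ring
    have ht1 : |(K * Q - nf * (K * v)) / (1 + Q)| ≤ 2 * (K * (2 * M ^ 2 * v ^ 2 + ε₀ * v)) := by
      rw [abs_div, abs_of_pos hP0]
      have e : K * Q - nf * (K * v) = K * (Q - nf * v) := by ring
      rw [e, abs_mul, abs_of_pos hK0, div_le_iff₀ hP0]
      have h9 : K * |Q - nf * v| ≤ K * (2 * M ^ 2 * v ^ 2 + ε₀ * v) :=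
        mul_le_mul_of_nonneg_left hkey hK0.le
      have h10 : 0 ≤ (K * (2 * M ^ 2 * v ^ 2 + ε₀ * v)) * (2 * (1 + Q) - 1) :=
        mul_nonneg (mul_nonneg hK0.le hβ0) (by linarith)
      linarith only [h9, h10]
    have ht2 : |(nf * (K * v)) * (1 / (1 + Q) - 1)| ≤ (M * (2 * G)) * (2 * |Q|) := by
      rw [abs_mul]
      have e : 1 / (1 + Q) - 1 = -(Q / (1 + Q)) := by field_simp; ring
      have h9 : |1 / (1 + Q) - 1| ≤ 2 * |Q| := by
        rw [e, abs_neg, abs_div, abs_of_pos hP0, div_le_iff₀ hP0]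
        have h10 : 0 ≤ |Q| * (2 * Q + 1) :=
          mul_nonneg (abs_nonneg Q) (by linarith)
        linarith only [h10]
      have h10 : |nf * (K * v)| ≤ M * (2 * G) := by
        rw [abs_mul, abs_of_nonneg hKv0]
        exact mul_le_mul hnfM hvK hKv0 hM0.le
      exact mul_le_mul h10 h9 (abs_nonneg _)
        (mul_nonneg hM0.le (by linarith))
    have ht3 : |nf * ((K * v) + ng)| ≤ M * (ε₀ + 2 * G ^ 2 / K) := by
      rw [abs_mul]
      exact mul_le_mul hnfM hung (abs_nonneg _) hM0.le
    have hQbound : |Q| ≤ 2 * M * G / K + (8 * M ^ 2 * G ^ 2 / K + 2 * G * ε₀) := by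
      linarith
    have h4MGQ : 4 * (M * G) * |Q|
        ≤ 4 * (M * G) * (2 * M * G / K + (8 * M ^ 2 * G ^ 2 / K + 2 * G * ε₀)) :=
      mul_le_mul_of_nonneg_left hQbound
        (mul_nonneg (by norm_num) (mul_nonneg hM0.le hG0.le))
    have hA1K : M ^ 2 * G ^ 2 / K ≤ M ^ 3 * G ^ 3 / K := by
      refine div_le_div₀ (by positivity) ?_ hK0 le_rfl
      have h10 : 0 ≤ (M ^ 2 * G ^ 2) * (M * G - 1) :=
        mul_nonneg (mul_nonneg (sq_nonneg M) (sq_nonneg G)) (by linarith only [hMG1])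
      linarith only [h10]
    have hA2K : M * G ^ 2 / K ≤ M ^ 3 * G ^ 3 / K := by
      refine div_le_div₀ (by positivity) ?_ hK0 le_rfl
      have hM2a : (1:ℝ) ≤ M ^ 2 := by linarith only [sq_nonneg (M - 1), hM1]
      have hM2G : (1:ℝ) ≤ M ^ 2 * G := by
        have h11 := mul_le_mul hM2a hG1 (by norm_num) (by positivity)
        linarith only [h11]
      have h10 : 0 ≤ (M * G ^ 2) * (M ^ 2 * G - 1) :=
        mul_nonneg (mul_nonneg hM0.le (sq_nonneg G)) (by linarith only [hM2G])
      linarith only [h10]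
    have hEe : E / K = 60 * (M ^ 3 * G ^ 3) / K := by rw [hEdef]; ring
    have hDe : D * ε₀ = 4 * G * ε₀ + 8 * M * G ^ 2 * ε₀ + M * ε₀ := by rw [hDdef]; ring
    have e2 : (M * (2 * G)) * (2 * |Q|) = 4 * (M * G) * |Q| := by ring
    have e3 : 4 * (M * G) * (2 * M * G / K + (8 * M ^ 2 * G ^ 2 / K + 2 * G * ε₀))
        = 8 * (M ^ 2 * G ^ 2) / K + 32 * (M ^ 3 * G ^ 3) / K + 8 * M * G ^ 2 * ε₀ := by
      ring
    have e4 : M * (ε₀ + 2 * G ^ 2 / K) = M * ε₀ + 2 * (M * G ^ 2) / K := by ring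
    have e5 : 8 * M ^ 2 * G ^ 2 / K = 8 * (M ^ 2 * G ^ 2) / K := by ring
    calc |K * (1 / (1 + Q) - 1) - nf * ng|
        = |-((K * Q - nf * (K * v)) / (1 + Q)) - (nf * (K * v)) * (1 / (1 + Q) - 1)
            - nf * ((K * v) + ng)| := by rw [hdecomp]
      _ ≤ |(K * Q - nf * (K * v)) / (1 + Q)| + |(nf * (K * v)) * (1 / (1 + Q) - 1)|
            + |nf * ((K * v) + ng)| := by
          have e6 : -((K * Q - nf * (K * v)) / (1 + Q)) - (nf * (K * v)) * (1 / (1 + Q) - 1)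
              - nf * ((K * v) + ng)
              = -((K * Q - nf * (K * v)) / (1 + Q) + (nf * (K * v)) * (1 / (1 + Q) - 1)
                + nf * ((K * v) + ng)) := by ring
          rw [e6, abs_neg]
          exact (abs_add_le _ _).trans (add_le_add_left (abs_add_le _ _) _)
      _ ≤ 2 * (K * (2 * M ^ 2 * v ^ 2 + ε₀ * v)) + (M * (2 * G)) * (2 * |Q|)
            + M * (ε₀ + 2 * G ^ 2 / K) := add_le_add (add_le_add ht1 ht2) ht3
      _ < ε := by
          have hMG3K : (0:ℝ) ≤ M ^ 3 * G ^ 3 / K := by positivity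
          rw [e2, e4]
          have t2 : 4 * (M * G) * |Q|
              ≤ 8 * (M ^ 2 * G ^ 2) / K + 32 * (M ^ 3 * G ^ 3) / K + 8 * M * G ^ 2 * ε₀ :=
            le_trans h4MGQ (le_of_eq e3)
          ring_nf at t2 hβK hA1K hA2K hEe hDe hEK hε₀D hMG3K ⊢
          linarith only [t2, hβK, hA1K, hA2K, hEe, hDe, hEK, hε₀D, hMG3K]
end

section
/- Let f : ℕ → ℝ be an unbounded function with f(k) > 0 for all k, and let n > 0 be a real number such that for every ε > 0 there is k₀ ∈ ℕ with k^{n−ε} < f(k) < k^{n+ε} for all k ≥ k₀. Define f⁻¹ : ℕ → ℕ by f⁻¹(m) = min { k ∈ ℕ | f(k) ≥ m } (the minimum exists because f is unbounded). Then for every ε > 0 there is m₀ ∈ ℕ such that m^{1/n − ε} < f⁻¹(m) < m^{1/n + ε} for all m ≥ m₀. -/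
/-- The generalized inverse of an unbounded function `f : ℕ → ℝ`:
`f⁻¹(m)` is the least `k` with `f k ≥ m`. -/
noncomputable def genInv (f : ℕ → ℝ) (m : ℕ) : ℕ :=
  sInf {k : ℕ | (m : ℝ) ≤ f k}

private lemma genInv_spec (f : ℕ → ℝ) (hunb : ∀ C : ℝ, ∃ k, C < f k) (m : ℕ) :
    (m : ℝ) ≤ f (genInv f m) := by
  have hne : {k : ℕ | (m : ℝ) ≤ f k}.Nonempty := by
    obtain ⟨k, hk⟩ := hunb m
    exact ⟨k, hk.le⟩
  exact Nat.sInf_mem hne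

private lemma bounded_below (f : ℕ → ℝ) (K : ℕ) : ∃ m₁ : ℕ, ∀ k < K, f k < m₁ := by
  induction K with
  | zero => exact ⟨0, fun k hk => absurd hk (Nat.not_lt_zero k)⟩
  | succ K ih =>
    obtain ⟨m₁, hm₁⟩ := ih
    refine ⟨max m₁ (⌈f K⌉₊ + 1), fun k hk => ?_⟩
    rcases Nat.lt_succ_iff_lt_or_eq.1 hk with h | h
    · exact lt_of_lt_of_le (hm₁ k h) (by exact_mod_cast le_max_left _ _)
    · subst h
      calc f k ≤ ⌈f k⌉₊ := Nat.le_ceil _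
        _ < (⌈f k⌉₊ + 1 : ℕ) := by exact_mod_cast Nat.lt_succ_self _
        _ ≤ _ := by exact_mod_cast le_max_right _ _

private lemma genInv_large (f : ℕ → ℝ) (hunb : ∀ C : ℝ, ∃ k, C < f k) (K : ℕ) :
    ∃ m₁ : ℕ, ∀ m ≥ m₁, K ≤ genInv f m := by
  obtain ⟨m₁, hm₁⟩ := bounded_below f K
  refine ⟨m₁, fun m hm => ?_⟩
  by_contra h
  push_neg at h
  have h1 : f (genInv f m) < m₁ := hm₁ _ h
  have h2 : (m : ℝ) ≤ f (genInv f m) := genInv_spec f hunb m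
  have : (m : ℝ) < m₁ := lt_of_le_of_lt h2 h1
  exact absurd (by exact_mod_cast this) (not_lt.2 hm)

theorem genInv_polynomial_growth (f : ℕ → ℝ) (hpos : ∀ k, 0 < f k)
    (hunb : ∀ C : ℝ, ∃ k, C < f k) (n : ℝ) (hn : 0 < n)
    (hgrow : ∀ ε : ℝ, 0 < ε → ∃ k₀ : ℕ, ∀ k ≥ k₀,
      (k : ℝ) ^ (n - ε) < f k ∧ f k < (k : ℝ) ^ (n + ε)) :
    ∀ ε : ℝ, 0 < ε → ∃ m₀ : ℕ, ∀ m ≥ m₀,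
      (m : ℝ) ^ (1 / n - ε) < (genInv f m : ℝ) ∧
      (genInv f m : ℝ) < (m : ℝ) ^ (1 / n + ε) := by
  intro ε hε
  set p : ℝ := 1 / n + ε / 2 with hp_def
  have hp : 0 < p := by positivity
  have hpn : p * n = 1 + n * ε / 2 := by
    rw [hp_def]; field_simp
  set δ : ℝ := min (n / 2) (min (n ^ 2 * ε) ((n * ε / 4) / p)) with hδ_def
  have hδ : 0 < δ := by
    apply lt_min (by positivity)
    exact lt_min (by positivity) (by positivity)
  have hδn : δ < n := lt_of_le_of_lt (min_le_left _ _) (by linarith)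
  have hδ1 : δ ≤ (n * ε / 4) / p := le_trans (min_le_right _ _) (min_le_right _ _)
  have hδ2 : δ ≤ n ^ 2 * ε := le_trans (min_le_right _ _) (min_le_left _ _)
  clear_value δ p
  have hA : 1 ≤ p * (n - δ) := by
    have h1 := hδ1
    have h2 : δ * p ≤ n * ε / 4 := (le_div_iff₀ hp).1 h1
    have h3 : p * (n - δ) = p * n - δ * p := by ring
    nlinarith [mul_pos hn hε]
  have hB : 1 / n - ε ≤ 1 / (n + δ) := by
    rcases le_or_gt (1 / n) ε with h | h
    · have : 0 < 1 / (n + δ) := by positivity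
      linarith
    · have hnε : n * ε < 1 := by
        rw [lt_div_iff₀ hn] at h; nlinarith
      rw [div_sub' hn.ne', div_le_div_iff₀ hn (by linarith)]
      nlinarith
  obtain ⟨k₀, hk₀⟩ := hgrow δ hδ
  -- eventual conditions
  have hcast : Filter.Tendsto (fun m : ℕ => (m : ℝ)) Filter.atTop Filter.atTop :=
    tendsto_natCast_atTop_atTop
  have hT : ∀ q : ℝ, 0 < q →
      Filter.Tendsto (fun m : ℕ => (m : ℝ) ^ q) Filter.atTop Filter.atTop :=
    fun q hq => (tendsto_rpow_atTop hq).comp hcast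
  have E1 : ∀ᶠ m : ℕ in Filter.atTop, (k₀ : ℝ) ≤ (m : ℝ) ^ p :=
    (hT p hp).eventually_ge_atTop _
  have E2 : ∀ᶠ m : ℕ in Filter.atTop, (2 : ℝ) ≤ (m : ℝ) ^ (ε / 2) :=
    (hT (ε / 2) (by positivity)).eventually_ge_atTop _
  have E3 : ∀ᶠ m : ℕ in Filter.atTop, max k₀ 1 ≤ genInv f m := by
    obtain ⟨m₁, hm₁⟩ := genInv_large f hunb (max k₀ 1)
    exact Filter.eventually_atTop.2 ⟨m₁, hm₁⟩
  have E4 : ∀ᶠ m : ℕ in Filter.atTop, 1 ≤ m := Filter.eventually_atTop.2 ⟨1, fun m h => h⟩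
  obtain ⟨m₀, hm₀⟩ := Filter.eventually_atTop.1 ((E1.and E2).and (E3.and E4))
  refine ⟨m₀, fun m hm => ?_⟩
  obtain ⟨⟨hm1, hm2⟩, hm3, hm4⟩ := hm₀ m hm
  have hm1R : (1 : ℝ) ≤ (m : ℝ) := by exact_mod_cast hm4
  have hm0R : (0 : ℝ) ≤ (m : ℝ) := by linarith
  set g : ℕ := genInv f m with hg_def
  have hgk₀ : k₀ ≤ g := le_trans (le_max_left _ _) hm3
  have hg1 : 1 ≤ g := le_trans (le_max_right _ _) hm3
  have hg1R : (1 : ℝ) ≤ (g : ℝ) := by exact_mod_cast hg1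
  constructor
  · -- lower bound
    have hfg : (m : ℝ) ≤ f g := genInv_spec f hunb m
    have hfg2 : f g < (g : ℝ) ^ (n + δ) := (hk₀ g hgk₀).2
    have hmlt : (m : ℝ) < (g : ℝ) ^ (n + δ) := lt_of_le_of_lt hfg hfg2
    have hnd : 0 < n + δ := by linarith
    have key : (m : ℝ) ^ (1 / (n + δ)) < (g : ℝ) := by
      have h := Real.rpow_lt_rpow hm0R hmlt (by positivity : (0:ℝ) < 1 / (n + δ))
      have heq : ((g : ℝ) ^ (n + δ)) ^ (1 / (n + δ)) = (g : ℝ) := by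
        rw [← Real.rpow_mul (by positivity), mul_one_div, div_self hnd.ne', Real.rpow_one]
      rwa [heq] at h
    calc (m : ℝ) ^ (1 / n - ε) ≤ (m : ℝ) ^ (1 / (n + δ)) :=
          Real.rpow_le_rpow_of_exponent_le hm1R hB
      _ < g := key
  · -- upper bound
    set x : ℝ := (m : ℝ) ^ p with hx_def
    have hx0 : (0 : ℝ) ≤ x := by positivity
    have hx1 : (1 : ℝ) ≤ x := by
      rw [hx_def]
      calc (1 : ℝ) = (m : ℝ) ^ (0 : ℝ) := (Real.rpow_zero _).symm
        _ ≤ (m : ℝ) ^ p := Real.rpow_le_rpow_of_exponent_le hm1R hp.le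
    set k : ℕ := ⌈x⌉₊ with hk_def
    have hxk : x ≤ (k : ℝ) := Nat.le_ceil x
    have hkk₀ : k₀ ≤ k := by
      have : (k₀ : ℝ) ≤ (k : ℝ) := le_trans hm1 hxk
      exact_mod_cast this
    have hfk : (k : ℝ) ^ (n - δ) < f k := (hk₀ k hkk₀).1
    have hmono : x ^ (n - δ) ≤ (k : ℝ) ^ (n - δ) :=
      Real.rpow_le_rpow hx0 hxk (by linarith)
    have hxnd : (m : ℝ) ≤ x ^ (n - δ) := by
      rw [hx_def, ← Real.rpow_mul hm0R]
      calc (m : ℝ) = (m : ℝ) ^ (1 : ℝ) := (Real.rpow_one _).symm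
        _ ≤ (m : ℝ) ^ (p * (n - δ)) := Real.rpow_le_rpow_of_exponent_le hm1R hA
    have hmem : (m : ℝ) ≤ f k := le_of_lt (lt_of_le_of_lt (le_trans hxnd hmono) hfk)
    have hgk : g ≤ k := Nat.sInf_le hmem
    have hceil : (k : ℝ) < x + 1 := Nat.ceil_lt_add_one hx0
    have hfinal : x + 1 ≤ (m : ℝ) ^ (1 / n + ε) := by
      have heq : (m : ℝ) ^ (1 / n + ε) = x * (m : ℝ) ^ (ε / 2) := by
        have hpe : 1 / n + ε = p + ε / 2 := by rw [hp_def]; ring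
        rw [hx_def, hpe, Real.rpow_add (by linarith : (0:ℝ) < m)]
      rw [heq]
      calc x + 1 ≤ x + x := by linarith
        _ = x * 2 := by ring
        _ ≤ x * (m : ℝ) ^ (ε / 2) := by
            apply mul_le_mul_of_nonneg_left hm2 hx0
    calc (g : ℝ) ≤ (k : ℝ) := by exact_mod_cast hgk
      _ < x + 1 := hceil
      _ ≤ _ := hfinal
end

section
/- Let f, g : ℕ → ℝ be functions with f(k) > 0 and g(k) > 0 for all k, of uniform polynomial growth with exponents n_f and n_g respectively. If f(k) ≥ g(k) for every sufficiently large k, then n_f ≥ n_g. -/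
open Filter Asymptotics Finset Real

-- squeeze lemma: if i * x i → n and 1 + x i > 0 then i * log(1 + x i) → n
lemma mul_log_one_add_tendsto (x : ℕ → ℝ) (n : ℝ) (hx1 : ∀ i, 0 < 1 + x i)
    (ha : Tendsto (fun i : ℕ => (i : ℝ) * x i) atTop (nhds n)) :
    Tendsto (fun i : ℕ => (i : ℝ) * Real.log (1 + x i)) atTop (nhds n) := by
  have hx0 : Tendsto x atTop (nhds 0) := by
    have h1 : Tendsto (fun i : ℕ => ((i : ℝ) * x i) * (i : ℝ)⁻¹) atTop (nhds (n * 0)) :=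
      ha.mul (tendsto_inv_atTop_zero.comp tendsto_natCast_atTop_atTop)
    rw [mul_zero] at h1
    apply h1.congr'
    filter_upwards [eventually_ge_atTop 1] with i hi
    have hi' : (i : ℝ) ≠ 0 := Nat.cast_ne_zero.mpr (by omega)
    rw [mul_comm (i:ℝ) (x i), mul_assoc, mul_inv_cancel₀ hi', mul_one]
  have hlow : Tendsto (fun i : ℕ => ((i : ℝ) * x i) / (1 + x i)) atTop (nhds n) := by
    have hd : Tendsto (fun i : ℕ => 1 + x i) atTop (nhds (1 + 0)) :=
      tendsto_const_nhds.add hx0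
    have := ha.div hd (by norm_num)
    simp only [add_zero, div_one] at this
    exact this
  refine tendsto_of_tendsto_of_tendsto_of_le_of_le hlow ha ?_ ?_
  · intro i
    show (i : ℝ) * x i / (1 + x i) ≤ (i : ℝ) * Real.log (1 + x i)
    rw [div_le_iff₀ (hx1 i)]
    have hlog : 1 - (1 + x i)⁻¹ ≤ Real.log (1 + x i) := by
      have h2 : Real.log (1 + x i)⁻¹ ≤ (1 + x i)⁻¹ - 1 :=
        Real.log_le_sub_one_of_pos (inv_pos.mpr (hx1 i))
      rw [Real.log_inv] at h2
      linarith
    have h3 : (i : ℝ) * (1 - (1 + x i)⁻¹) ≤ (i : ℝ) * Real.log (1 + x i) :=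
      mul_le_mul_of_nonneg_left hlog (Nat.cast_nonneg i)
    have h4 : (i : ℝ) * (1 - (1 + x i)⁻¹) * (1 + x i) = (i : ℝ) * x i := by
      field_simp [(hx1 i).ne']
      ring
    nlinarith [mul_le_mul_of_nonneg_right h3 (hx1 i).le]
  · intro i
    show (i : ℝ) * Real.log (1 + x i) ≤ (i : ℝ) * x i
    have hlog : Real.log (1 + x i) ≤ x i := by
      have := Real.log_le_sub_one_of_pos (hx1 i)
      linarith
    exact mul_le_mul_of_nonneg_left hlog (Nat.cast_nonneg i)

lemma log_div_log_tendsto (f : ℕ → ℝ) (hf : ∀ k, 0 < f k) (n : ℝ)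
    (h : Tendsto (fun k : ℕ => (k : ℝ) * (f (k + 1) - f k) / f k) atTop (nhds n)) :
    Tendsto (fun k : ℕ => Real.log (f k) / Real.log k) atTop (nhds n) := by
  set b : ℕ → ℝ := fun i => Real.log (f (i + 1)) - Real.log (f i) with hbdef
  set c : ℕ → ℝ := fun i => Real.log ((i : ℕ) + 1 : ℕ) - Real.log (i : ℕ) with hcdef
  -- i * b i → n
  have hb : Tendsto (fun i : ℕ => (i : ℝ) * b i) atTop (nhds n) := by
    have h2 : ∀ i, 1 + (f (i + 1) - f i) / f i = f (i + 1) / f i := by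
      intro i
      field_simp [(hf i).ne']
      ring
    have h1 := mul_log_one_add_tendsto (fun i => (f (i + 1) - f i) / f i) n
      (fun i => by
        show (0:ℝ) < 1 + (f (i + 1) - f i) / f i
        rw [h2 i]; exact div_pos (hf _) (hf _))
      (h.congr (fun i => by rw [mul_div_assoc]))
    apply h1.congr
    intro i
    show (i : ℝ) * Real.log (1 + (f (i + 1) - f i) / f i) = (i : ℝ) * b i
    rw [h2 i, Real.log_div (hf _).ne' (hf _).ne']
  -- i * c i → 1
  have hc : Tendsto (fun i : ℕ => (i : ℝ) * c i) atTop (nhds 1) := by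
    have h1 := mul_log_one_add_tendsto (fun i => ((i : ℝ))⁻¹) 1
      (fun i => by positivity)
      (by
        apply tendsto_const_nhds.congr'
        filter_upwards [eventually_ge_atTop 1] with i hi
        have : (i : ℝ) ≠ 0 := Nat.cast_ne_zero.mpr (by omega)
        field_simp)
    apply h1.congr'
    filter_upwards [eventually_ge_atTop 1] with i hi
    have hi' : (i : ℝ) ≠ 0 := Nat.cast_ne_zero.mpr (by omega)
    have hip : (0:ℝ) < i := by positivity
    congr 1
    simp only [hcdef]
    push_cast
    rw [← Real.log_div (by positivity) hi']
    congr 1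
    field_simp
  have hcnonneg : ∀ i, 0 ≤ c i := by
    intro i
    rcases Nat.eq_zero_or_pos i with h0 | h0
    · simp [hcdef, h0]
    · have hip : (0:ℝ) < i := by exact_mod_cast h0
      have := Real.log_le_log hip (by push_cast; linarith : (i:ℝ) ≤ ((i + 1 : ℕ) : ℝ))
      simp only [hcdef]; linarith
  have hcpos : ∀ i : ℕ, 1 ≤ i → 0 < c i := by
    intro i hi
    have hip : (0:ℝ) < i := by exact_mod_cast hi
    have := Real.log_lt_log hip (by push_cast; linarith : (i:ℝ) < ((i + 1 : ℕ) : ℝ))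
    simp only [hcdef]; linarith
  have hsumc : ∀ k, ∑ i ∈ Finset.range k, c i = Real.log k := by
    intro k
    simp only [hcdef]
    rw [Finset.sum_range_sub (fun i => Real.log (i : ℕ))]
    simp
  have htop : Tendsto (fun k => ∑ i ∈ Finset.range k, c i) atTop atTop := by
    simp only [hsumc]
    exact Real.tendsto_log_atTop.comp tendsto_natCast_atTop_atTop
  -- little-o
  have hlo : (fun i => b i - n * c i) =o[atTop] c := by
    rw [isLittleO_iff_tendsto']
    · have hr : Tendsto (fun i : ℕ => ((i:ℝ) * b i) / ((i:ℝ) * c i) - n) atTop (nhds 0) := by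
        have := (hb.div hc one_ne_zero).sub_const n
        simpa using this
      apply hr.congr'
      filter_upwards [eventually_ge_atTop 1] with i hi
      have hi' : (i : ℝ) ≠ 0 := Nat.cast_ne_zero.mpr (by omega)
      have hci := hcpos i hi
      rw [mul_div_mul_left _ _ hi']
      field_simp
    · filter_upwards [eventually_ge_atTop 1] with i hi hc0
      exact absurd hc0 (hcpos i hi).ne'
  have hsum := hlo.sum_range hcnonneg htop
  have hsumb : ∀ k, ∑ i ∈ Finset.range k, (b i - n * c i)
      = Real.log (f k) - Real.log (f 0) - n * Real.log k := by
    intro k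
    rw [Finset.sum_sub_distrib, ← Finset.mul_sum, hsumc]
    simp only [hbdef]
    rw [Finset.sum_range_sub (fun i => Real.log (f i))]
  simp only [hsumb, hsumc] at hsum
  rw [isLittleO_iff_tendsto'] at hsum
  · have hinv : Tendsto (fun k : ℕ => (Real.log k)⁻¹) atTop (nhds 0) :=
      (Real.tendsto_log_atTop.comp tendsto_natCast_atTop_atTop).inv_tendsto_atTop
    have hcomb := (hsum.add (hinv.const_mul (Real.log (f 0)))).add_const n
    simp only [mul_zero, zero_add, add_zero] at hcomb
    apply hcomb.congr'
    filter_upwards [eventually_ge_atTop 2] with k hk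
    have hlk : 0 < Real.log k := Real.log_pos (by exact_mod_cast by omega)
    field_simp
    ring
  · filter_upwards [eventually_ge_atTop 2] with k hk h0
    exfalso
    have hlk : 0 < Real.log k := Real.log_pos (by exact_mod_cast by omega)
    exact hlk.ne' h0

theorem uniformPolyGrowth_mono (f g : ℕ → ℝ) (hf : ∀ k, 0 < f k) (hg : ∀ k, 0 < g k)
    (nf ng : ℝ) (hfu : UniformPolyGrowth f nf) (hgu : UniformPolyGrowth g ng)
    (hle : ∃ k₀ : ℕ, ∀ k ≥ k₀, g k ≤ f k) :
    ng ≤ nf := by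
  obtain ⟨k₀, hk₀⟩ := hle
  have Lf := log_div_log_tendsto f hf nf hfu
  have Lg := log_div_log_tendsto g hg ng hgu
  refine le_of_tendsto_of_tendsto Lg Lf ?_
  filter_upwards [eventually_ge_atTop k₀, eventually_ge_atTop 2] with k h1 h2
  have hlk : 0 < Real.log k := Real.log_pos (by exact_mod_cast by omega)
  have hll := Real.log_le_log (hg k) (hk₀ k h1)
  show Real.log (g k) / Real.log k ≤ Real.log (f k) / Real.log k
  gcongr
end

section
/- Let f : ℕ → ℝ be a function with f(k) > 0 for all k, of uniform polynomial growth with exponent n_f. Then for every ε > 0 there is k₀ ∈ ℕ such that k^{n_f − ε} < f(k) < k^{n_f + ε} for every k ≥ k₀. -/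
open Filter Real Topology

/-- Telescoping comparison of increments. -/
lemma telescope_le (g h : ℕ → ℝ) (m : ℕ)
    (H : ∀ j, m ≤ j → g (j + 1) - g j ≤ h (j + 1) - h j) :
    ∀ k, m ≤ k → g k - g m ≤ h k - h m := by
  intro k hk
  induction k, hk using Nat.le_induction with
  | base => simp
  | succ n hn ih => have := H n hn; linarith

theorem uniformPolyGrowth_bounds (f : ℕ → ℝ) (hf : ∀ k, 0 < f k)
    (nf : ℝ) (hfu : UniformPolyGrowth f nf) :
    ∀ ε : ℝ, 0 < ε → ∃ k₀ : ℕ, ∀ k ≥ k₀,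
      (k : ℝ) ^ (nf - ε) < f k ∧ f k < (k : ℝ) ^ (nf + ε) := by
  have ha : Tendsto (fun k : ℕ => (k : ℝ) * (f (k + 1) - f k) / f k) atTop (𝓝 nf) := hfu
  set a : ℕ → ℝ := fun k => (k : ℝ) * (f (k + 1) - f k) / f k with ha_def
  set L : ℕ → ℝ := fun k => Real.log (f (k + 1)) - Real.log (f k) with hL_def
  -- a k / k → 0
  have hak : Tendsto (fun k : ℕ => a k / (k : ℝ)) atTop (𝓝 0) := by
    have h1 : Tendsto (fun k : ℕ => ((k : ℝ))⁻¹) atTop (𝓝 0) :=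
      tendsto_inv_atTop_zero.comp tendsto_natCast_atTop_atTop
    have := ha.mul h1
    simpa [div_eq_mul_inv] using this
  -- basic eventual facts
  have hev : ∀ᶠ k : ℕ in atTop, 1 ≤ k ∧ |a k / (k : ℝ)| < 1 / 2 := by
    filter_upwards [eventually_ge_atTop 1,
      hak.eventually (eventually_abs_sub_lt 0 (by norm_num : (0:ℝ) < 1/2))] with k h1 h2
    exact ⟨h1, by simpa using h2⟩
  -- the key identity and inequalities, eventually
  have key : ∀ᶠ k : ℕ in atTop,
      a k / (1 + a k / (k : ℝ)) ≤ (k : ℝ) * L k ∧ (k : ℝ) * L k ≤ a k := by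
    filter_upwards [hev] with k hk
    obtain ⟨hk1, hk2⟩ := hk
    have hkpos : (0 : ℝ) < (k : ℝ) := by exact_mod_cast hk1
    set x : ℝ := a k / (k : ℝ) with hx_def
    have hx : 0 < 1 + x := by
      have := abs_lt.1 hk2
      linarith [this.1]
    have hfk0 : f k ≠ 0 := (hf k).ne'
    have hk0 : (k : ℝ) ≠ 0 := hkpos.ne'
    have hxval : x = (f (k + 1) - f k) / f k := by
      rw [hx_def, ha_def]
      field_simp
    have hLk : L k = Real.log (1 + x) := by
      have : 1 + x = f (k + 1) / f k := by
        rw [hxval]; field_simp; ring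
      rw [hL_def, this, Real.log_div (hf _).ne' (hf _).ne']
    have hax : a k = (k : ℝ) * x := by
      rw [hx_def]; field_simp
    constructor
    · -- lower bound: x/(1+x) ≤ log (1+x)
      have hlog : 1 - (1 + x)⁻¹ ≤ Real.log (1 + x) := Real.one_sub_inv_le_log_of_pos hx
      have h1 : 1 - (1 + x)⁻¹ = x / (1 + x) := by field_simp; ring
      have : (k : ℝ) * (x / (1 + x)) ≤ (k : ℝ) * L k := by
        rw [hLk]
        exact mul_le_mul_of_nonneg_left (h1 ▸ hlog) hkpos.le
      calc a k / (1 + x) = (k : ℝ) * (x / (1 + x)) := by rw [hax]; ring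
        _ ≤ (k : ℝ) * L k := this
    · have hlog : Real.log (1 + x) ≤ x := by
        have := Real.log_le_sub_one_of_pos hx
        linarith
      calc (k : ℝ) * L k = (k : ℝ) * Real.log (1 + x) := by rw [hLk]
        _ ≤ (k : ℝ) * x := mul_le_mul_of_nonneg_left hlog hkpos.le
        _ = a k := hax.symm
  -- squeeze: k * L k → nf
  have hlow : Tendsto (fun k : ℕ => a k / (1 + a k / (k : ℝ))) atTop (𝓝 nf) := by
    have hden : Tendsto (fun k : ℕ => 1 + a k / (k : ℝ)) atTop (𝓝 1) := by
      simpa using tendsto_const_nhds.add hak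
    have := ha.div hden one_ne_zero
    rw [div_one] at this; exact this
  have hc : Tendsto (fun k : ℕ => (k : ℝ) * L k) atTop (𝓝 nf) :=
    tendsto_of_tendsto_of_tendsto_of_le_of_le' hlow ha
      (key.mono fun k hk => hk.1) (key.mono fun k hk => hk.2)
  -- denominator
  have hd : Tendsto (fun k : ℕ => (k : ℝ) * Real.log (1 + 1 / (k : ℝ))) atTop (𝓝 1) :=
    (Real.tendsto_mul_log_one_add_div_atTop 1).comp tendsto_natCast_atTop_atTop
  have hB : Tendsto (fun k : ℕ => ((k : ℝ) * L k) / ((k : ℝ) * Real.log (1 + 1 / (k : ℝ))))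
      atTop (𝓝 nf) := by
    have := hc.div hd one_ne_zero
    rw [div_one] at this; exact this
  intro ε hε
  have hε2 : 0 < ε / 2 := half_pos hε
  -- eventually the increment comparison holds
  have hincr : ∀ᶠ j : ℕ in atTop,
      (nf - ε / 2) * (Real.log ((j : ℝ) + 1) - Real.log (j : ℝ)) ≤ L j ∧
      L j ≤ (nf + ε / 2) * (Real.log ((j : ℝ) + 1) - Real.log (j : ℝ)) := by
    filter_upwards [eventually_ge_atTop 1,
      hB.eventually (eventually_abs_sub_lt nf hε2)] with j h1 h2
    have hjpos : (0 : ℝ) < (j : ℝ) := by exact_mod_cast h1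
    have hlogid : Real.log ((j : ℝ) + 1) - Real.log (j : ℝ) = Real.log (1 + 1 / (j : ℝ)) := by
      rw [← Real.log_div (by positivity) hjpos.ne']
      congr 1
      field_simp
    have hdenpos : 0 < (j : ℝ) * Real.log (1 + 1 / (j : ℝ)) := by
      apply mul_pos hjpos
      apply Real.log_pos
      have : 0 < 1 / (j : ℝ) := by positivity
      linarith
    have habs := abs_lt.1 h2
    constructor
    · rw [hlogid]
      have := (lt_div_iff₀ hdenpos).1 (by linarith [habs.1] :
        nf - ε / 2 < ((j : ℝ) * L j) / ((j : ℝ) * Real.log (1 + 1 / (j : ℝ))))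
      nlinarith [hjpos]
    · rw [hlogid]
      have := (div_lt_iff₀ hdenpos).1 (by linarith [habs.2] :
        ((j : ℝ) * L j) / ((j : ℝ) * Real.log (1 + 1 / (j : ℝ))) < nf + ε / 2)
      nlinarith [hjpos]
  obtain ⟨m, hm⟩ := (hincr.and (eventually_ge_atTop 1)).exists_forall_of_atTop
  -- telescoping bounds for k ≥ m
  have hup : ∀ k, m ≤ k → Real.log (f k) - Real.log (f m) ≤
      (nf + ε / 2) * Real.log (k : ℝ) - (nf + ε / 2) * Real.log (m : ℝ) := by
    apply telescope_le (fun k => Real.log (f k)) (fun k => (nf + ε / 2) * Real.log (k : ℝ)) m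
    intro j hj
    have h := (hm j hj).1.2
    have : Real.log ((j : ℝ) + 1) = Real.log ((j + 1 : ℕ) : ℝ) := by push_cast; ring_nf
    simp only [← this]
    have hL : Real.log (f (j + 1)) - Real.log (f j) = L j := rfl
    rw [hL]
    linarith
  have hlo : ∀ k, m ≤ k → (nf - ε / 2) * Real.log (k : ℝ) - (nf - ε / 2) * Real.log (m : ℝ) ≤
      Real.log (f k) - Real.log (f m) := by
    apply telescope_le (fun k => (nf - ε / 2) * Real.log (k : ℝ)) (fun k => Real.log (f k)) m
    intro j hj
    have h := (hm j hj).1.1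
    have : Real.log ((j : ℝ) + 1) = Real.log ((j + 1 : ℕ) : ℝ) := by push_cast; ring_nf
    simp only [← this]
    have hL : Real.log (f (j + 1)) - Real.log (f j) = L j := rfl
    rw [hL]
    linarith
  -- choose k₀
  set C : ℝ := |Real.log (f m) - (nf + ε / 2) * Real.log (m : ℝ)| +
      |Real.log (f m) - (nf - ε / 2) * Real.log (m : ℝ)| with hC_def
  have hClog : ∀ᶠ k : ℕ in atTop, C < ε / 2 * Real.log (k : ℝ) := by
    have hlogtop : Tendsto (fun k : ℕ => Real.log (k : ℝ)) atTop atTop :=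
      Real.tendsto_log_atTop.comp tendsto_natCast_atTop_atTop
    filter_upwards [hlogtop.eventually_gt_atTop (2 * C / ε)] with k hk
    have : 2 * C / ε * (ε / 2) = C := by field_simp
    nlinarith
  obtain ⟨k₀, hk₀⟩ := ((hClog.and (eventually_ge_atTop m)).and
    (eventually_ge_atTop 1)).exists_forall_of_atTop
  refine ⟨k₀, fun k hk => ?_⟩
  obtain ⟨⟨hkC, hkm⟩, hk1⟩ := hk₀ k hk
  have hkpos : (0 : ℝ) < (k : ℝ) := by exact_mod_cast hk1
  have hup' := hup k hkm
  have hlo' := hlo k hkm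
  have habs1 : Real.log (f m) - (nf + ε / 2) * Real.log (m : ℝ) ≤ C := by
    rw [hC_def]
    have := abs_nonneg (Real.log (f m) - (nf - ε / 2) * Real.log (m : ℝ))
    have := le_abs_self (Real.log (f m) - (nf + ε / 2) * Real.log (m : ℝ))
    linarith
  have habs2 : (nf - ε / 2) * Real.log (m : ℝ) - Real.log (f m) ≤ C := by
    rw [hC_def]
    have := abs_nonneg (Real.log (f m) - (nf + ε / 2) * Real.log (m : ℝ))
    have := neg_abs_le (Real.log (f m) - (nf - ε / 2) * Real.log (m : ℝ))
    linarith
  have hupper : Real.log (f k) < (nf + ε) * Real.log (k : ℝ) := by nlinarith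
  have hlower : (nf - ε) * Real.log (k : ℝ) < Real.log (f k) := by nlinarith
  constructor
  · rw [Real.rpow_def_of_pos hkpos, mul_comm]
    calc Real.exp ((nf - ε) * Real.log (k : ℝ)) < Real.exp (Real.log (f k)) :=
          Real.exp_lt_exp.2 hlower
      _ = f k := Real.exp_log (hf k)
  · rw [Real.rpow_def_of_pos hkpos, mul_comm]
    calc f k = Real.exp (Real.log (f k)) := (Real.exp_log (hf k)).symm
      _ < Real.exp ((nf + ε) * Real.log (k : ℝ)) := Real.exp_lt_exp.2 hupper
end

section
/- Let K be a field, A ⊆ K a subring, and P ∈ A a nonzero element. Let ∂⁽¹⁾, …, ∂⁽ᴿ⁾ : K → K be derivations (not necessarily distinct or commuting) such that P·∂⁽ʲ⁾(a) ∈ A for every a ∈ A and every j. Then for every S ≥ 1, every choice of S derivations from this family, and every a ∈ A, one has P^{2S−1} · (∂^{(j₁)} ∘ ⋯ ∘ ∂^{(j_S)})(a) ∈ A. In particular, each iterated derivative of an element of A is an element of A divided by an odd power of the fixed denominator P. -/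
/-- If every first derivative (with respect to a family of derivations) of an
element of the subring `A` lies in `P⁻¹ • A`, then every `S`-fold iterated
derivative of an element of `A` lies in `P^(2S-1)⁻¹ • A`. -/
theorem iterated_derivative_denominator {K : Type*} [Field K] (A : Subring K)
    (P : K) (hPA : P ∈ A) (hP0 : P ≠ 0)
    {ι : Type*} (D : ι → Derivation ℤ K K)
    (hD : ∀ j : ι, ∀ a ∈ A, P * D j a ∈ A) :
    ∀ l : List ι, l ≠ [] → ∀ a ∈ A,
      P ^ (2 * l.length - 1) * (l.foldr (fun j x => D j x) a) ∈ A := by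
  intro l
  induction l with
  | nil => intro h; exact absurd rfl h
  | cons j l ih =>
    intro _ a ha
    rcases eq_or_ne l [] with rfl | hl
    · simpa using hD j a ha
    · have hy := ih hl a ha
      set x : K := l.foldr (fun j x => D j x) a with hx
      set n : ℕ := l.length with hn
      have hn1 : 1 ≤ n := List.length_pos_iff.mpr hl
      set m : ℕ := 2 * n - 1 with hm
      have hm2 : m + 2 = 2 * n + 1 := by omega
      have hexp : 2 * (j :: l).length - 1 = m + 2 := by
        simp [List.length_cons]; omega
      rw [hexp]
      -- key algebraic identity
      have hDpow : D j (P ^ m * x) = P ^ m * D j x + x * ((m : K) * (P ^ (m - 1) * D j P)) := by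
        rw [Derivation.leibniz, Derivation.leibniz_pow]
        simp [smul_eq_mul]
      obtain ⟨q, hq⟩ : ∃ q, m = q + 1 := ⟨m - 1, by omega⟩
      have key : P ^ (m + 2) * D j x
          = P * (P * D j (P ^ m * x)) - (m : K) * ((P ^ m * x) * (P * D j P)) := by
        rw [hDpow, hq]
        simp only [Nat.add_sub_cancel]
        push_cast
        ring
      rw [List.foldr_cons, ← hx, key]
      refine sub_mem (A.mul_mem hPA (hD j _ hy)) ?_
      have : ((m : K) : K) = ((m : ℤ) : K) := by push_cast; ring
      rw [this, ← zsmul_eq_mul]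
      exact A.zsmul_mem (A.mul_mem hy (hD j P hPA)) _
end

section
/- Let E be an inner product space over ℂ, F ⊆ E a subspace, and let x = u + w₁ and y = v + w₂ be unit vectors in E, where u, v ∈ F and w₁, w₂ are orthogonal to F. Then ‖u‖²‖v‖² − |⟨u,v⟩|² ≤ 1 − |⟨x,y⟩|². Equivalently, when u and v are nonzero, ‖u‖·‖v‖·|[u],[v]| ≤ |[x],[y]| in the Fubini–Study distance; that is, the projective distance between the orthogonal projections of two projective points onto ℙ(F) drops by at most the product of the distances of the two points from ℙ(F^⊥). -/
/-- Projection onto a subspace decreases the Fubini–Study distance by at most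
the product of the distances from the orthogonal complement: for unit vectors
`x = u + w₁`, `y = v + w₂` with `u, v ∈ F` and `w₁, w₂ ⊥ F`,
`‖u‖²‖v‖² - |⟨u,v⟩|² ≤ 1 - |⟨x,y⟩|²`. -/
theorem fubiniStudy_projection_estimate {E : Type*} [NormedAddCommGroup E]
    [InnerProductSpace ℂ E] (F : Submodule ℂ E) (u v w₁ w₂ : E)
    (hu : u ∈ F) (hv : v ∈ F) (hw₁ : w₁ ∈ Fᗮ) (hw₂ : w₂ ∈ Fᗮ)
    (hx : ‖u + w₁‖ = 1) (hy : ‖v + w₂‖ = 1) :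
    ‖u‖ ^ 2 * ‖v‖ ^ 2 - ‖(inner ℂ u v : ℂ)‖ ^ 2 ≤
      1 - ‖(inner ℂ (u + w₁) (v + w₂) : ℂ)‖ ^ 2 := by
  have huw₂ : (inner ℂ u w₂ : ℂ) = 0 := hw₂ u hu
  have hvw₁ : (inner ℂ v w₁ : ℂ) = 0 := hw₁ v hv
  have hw₁v : (inner ℂ w₁ v : ℂ) = 0 := by
    rw [← inner_conj_symm, hvw₁, map_zero]
  have huw₁ : (inner ℂ u w₁ : ℂ) = 0 := hw₁ u hu
  have hvw₂ : (inner ℂ v w₂ : ℂ) = 0 := hw₂ v hv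
  have hexp : (inner ℂ (u + w₁) (v + w₂) : ℂ) = inner ℂ u v + inner ℂ w₁ w₂ := by
    simp [inner_add_left, inner_add_right, huw₂, hw₁v]
  have hnx : ‖u‖ ^ 2 + ‖w₁‖ ^ 2 = 1 := by
    have h := norm_add_sq_eq_norm_sq_add_norm_sq_of_inner_eq_zero u w₁ huw₁
    rw [hx] at h; nlinarith [h]
  have hny : ‖v‖ ^ 2 + ‖w₂‖ ^ 2 = 1 := by
    have h := norm_add_sq_eq_norm_sq_add_norm_sq_of_inner_eq_zero v w₂ hvw₂
    rw [hy] at h; nlinarith [h]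
  have hA : ‖(inner ℂ u v : ℂ)‖ ≤ ‖u‖ * ‖v‖ := norm_inner_le_norm u v
  have hB : ‖(inner ℂ w₁ w₂ : ℂ)‖ ≤ ‖w₁‖ * ‖w₂‖ := norm_inner_le_norm w₁ w₂
  have hC : ‖(inner ℂ (u + w₁) (v + w₂) : ℂ)‖ ≤
      ‖(inner ℂ u v : ℂ)‖ + ‖(inner ℂ w₁ w₂ : ℂ)‖ := by
    rw [hexp]; exact norm_add_le _ _
  have h0 : (0:ℝ) ≤ ‖(inner ℂ (u + w₁) (v + w₂) : ℂ)‖ := norm_nonneg _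
  have h1 : (0:ℝ) ≤ ‖(inner ℂ u v : ℂ)‖ := norm_nonneg _
  have h2 : (0:ℝ) ≤ ‖(inner ℂ w₁ w₂ : ℂ)‖ := norm_nonneg _
  nlinarith [sq_nonneg (‖u‖ * ‖w₂‖ - ‖v‖ * ‖w₁‖), mul_nonneg (norm_nonneg u) (norm_nonneg v),
    mul_nonneg (norm_nonneg w₁) (norm_nonneg w₂), sq_nonneg (‖(inner ℂ u v : ℂ)‖ + ‖(inner ℂ w₁ w₂ : ℂ)‖),
    mul_le_mul hA hB h2 (mul_nonneg (norm_nonneg u) (norm_nonneg v)),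
    mul_self_le_mul_self h2 hB, mul_self_le_mul_self h0 hC]
end
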